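/- The single-user water-filling allocation is optimal: among all measurable P : Ω → [0,∞) with E[P(H)] ≤ p̄, the expectation E[log(1 + |H|²P(H))] is maximized by P*(H) = max(1/ν − 1/|H|², 0), where ν > 0 is chosen so that E[P*(H)] = p̄ (assuming |H|² > 0 a.s. and such ν exists). -/

import Mathlib

open MeasureTheory Real

lemma wf_pointwise {g ν p : ℝ} (hg : 0 < g) (hν : 0 < ν) (hp : 0 ≤ p) :
    Real.log (1 + g * p) ≤
      Real.log (1 + g * max (1 / ν - 1 / g) 0) + ν * (p - max (1 / ν - 1 / g) 0) := by
  set q := max (1 / ν - 1 / g) 0 with hq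
  have hq0 : 0 ≤ q := le_max_right _ _
  have h1p : (0:ℝ) < 1 + g * p := by positivity
  have h1q : (0:ℝ) < 1 + g * q := by positivity
  rcases le_or_gt (1 / ν - 1 / g) 0 with h | h
  · -- q = 0, and g ≤ ν
    have hq' : q = 0 := max_eq_right h
    have hgν : g ≤ ν := by
      rw [sub_nonpos, div_le_div_iff₀ hν hg] at h
      linarith
    rw [hq']
    have hlog : Real.log (1 + g * p) ≤ g * p := by
      have := Real.log_le_sub_one_of_pos h1p
      linarith
    have : g * p ≤ ν * p := mul_le_mul_of_nonneg_right hgν hp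
    simp only [mul_zero, add_zero, Real.log_one, sub_zero, zero_add]
    linarith
  · have hq' : q = 1 / ν - 1 / g := max_eq_left h.le
    have h1q' : 1 + g * q = g / ν := by
      rw [hq']
      field_simp
      ring
    have hpos : (0:ℝ) < g / ν := by positivity
    have key : Real.log ((1 + g * p) / (g / ν)) ≤ (1 + g * p) / (g / ν) - 1 :=
      Real.log_le_sub_one_of_pos (by positivity)
    rw [Real.log_div (by positivity) (by positivity)] at key
    have hdiv : (1 + g * p) / (g / ν) = ν / g + ν * p := by
      field_simp
    rw [hdiv] at key
    have hrhs : ν * (p - q) = ν / g + ν * p - 1 := by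
      rw [hq']; field_simp; ring
    rw [h1q', hrhs]
    linarith

theorem waterfilling_optimal {Ω : Type*} [MeasurableSpace Ω]
    (μ : Measure Ω) [IsProbabilityMeasure μ]
    (H : Ω → ℂ) (pbar : ℝ) (hpbar : 0 < pbar) (ν : ℝ) (hν : 0 < ν)
    (hH : ∀ᵐ ω ∂μ, 0 < ‖H ω‖ ^ 2)
    (Pstar : Ω → ℝ)
    (hPstar : ∀ ω, Pstar ω = max (1 / ν - 1 / ‖H ω‖ ^ 2) 0)
    (hPstarInt : Integrable Pstar μ)
    (hPstarBudget : ∫ ω, Pstar ω ∂μ = pbar)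
    (hPstarRate : Integrable (fun ω => Real.log (1 + ‖H ω‖ ^ 2 * Pstar ω)) μ) :
    ∀ P : Ω → ℝ, (∀ ω, 0 ≤ P ω) → Integrable P μ → (∫ ω, P ω ∂μ) ≤ pbar →
      Integrable (fun ω => Real.log (1 + ‖H ω‖ ^ 2 * P ω)) μ →
      ∫ ω, Real.log (1 + ‖H ω‖ ^ 2 * P ω) ∂μ ≤
        ∫ ω, Real.log (1 + ‖H ω‖ ^ 2 * Pstar ω) ∂μ := by
  intro P hP hPInt hPbud hPRate
  have hRHSInt : Integrable
      (fun ω => Real.log (1 + ‖H ω‖ ^ 2 * Pstar ω) + ν * (P ω - Pstar ω)) μ :=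
    hPstarRate.add ((hPInt.sub hPstarInt).const_mul ν)
  have h2 : Integrable (fun ω => ν * (P ω - Pstar ω)) μ :=
    (hPInt.sub hPstarInt).const_mul ν
  have hmono : ∫ ω, Real.log (1 + ‖H ω‖ ^ 2 * P ω) ∂μ ≤
      ∫ ω, (Real.log (1 + ‖H ω‖ ^ 2 * Pstar ω) + ν * (P ω - Pstar ω)) ∂μ := by
    refine integral_mono_ae hPRate hRHSInt ?_
    filter_upwards [hH] with ω hg
    rw [hPstar ω]
    exact wf_pointwise hg hν (hP ω)
  have hsplit : ∫ ω, (Real.log (1 + ‖H ω‖ ^ 2 * Pstar ω) + ν * (P ω - Pstar ω)) ∂μ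
      = (∫ ω, Real.log (1 + ‖H ω‖ ^ 2 * Pstar ω) ∂μ)
        + ν * ((∫ ω, P ω ∂μ) - ∫ ω, Pstar ω ∂μ) := by
    rw [integral_add hPstarRate h2, MeasureTheory.integral_const_mul, integral_sub hPInt hPstarInt]
  have hneg : ν * ((∫ ω, P ω ∂μ) - ∫ ω, Pstar ω ∂μ) ≤ 0 := by
    rw [hPstarBudget]
    exact mul_nonpos_of_nonneg_of_nonpos hν.le (by linarith)
  linarith [hsplit ▸ hmono]
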